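/- Let Ψ : ℕ → ℝ satisfy Ψ(0) = 0 and define λ^{(m)}_k := Σ_{i=0}^{k−1} C(k−1,i)·(−1)^i·(Ψ(m−k+i+1) − Ψ(m−k+i)) for 1 ≤ k ≤ m. Then for all integers 1 ≤ j ≤ n, Σ_{k=1}^{n} (C(n,k) − C(n−j,k))·λ^{(n)}_k = Ψ(j). In particular (j = n) the sum of all shock rates Σ_{k=1}^{n} C(n,k)·λ^{(n)}_k equals Ψ(n), so the series subsystem of any j of the n components has exponentially distributed lifetime with rate Ψ(j). -/

import Mathlib

/-- The Lévy-frailty Marshall–Olkin shock rate `λ^{(m)}_k` associated to a set of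
`k` components out of `m`, for a Laplace exponent `Ψ`. -/
noncomputable def lfmoRate (Ψ : ℕ → ℝ) (m k : ℕ) : ℝ :=
  ∑ i ∈ Finset.range k,
    ((k - 1).choose i : ℝ) * (-1 : ℝ) ^ i * (Ψ (m - k + i + 1) - Ψ (m - k + i))

open Finset

lemma neg_one_pow_sub' {a b : ℕ} (h : b ≤ a) : (-1:ℝ)^(a-b) = (-1)^a * (-1)^b := by
  rw [← pow_add]
  have : a + b = (a - b) + 2*b := by omega
  rw [this, pow_add, pow_mul]
  norm_num

lemma altsum {n : ℕ} (hn : n ≠ 0) :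
    ∑ i ∈ range (n+1), (-1:ℝ)^i * (n.choose i : ℝ) = 0 := by
  have h := add_pow (-1 : ℝ) 1 n
  simp only [one_pow, mul_one, neg_add_cancel] at h
  rw [← h, zero_pow hn]

lemma lemC {r m : ℕ} (h : r < m) :
    ∑ k ∈ Icc r m, (-1:ℝ)^k * (m.choose k : ℝ) * (k.choose r : ℝ) = 0 := by
  have step : ∀ k ∈ Icc r m,
      (-1:ℝ)^k * (m.choose k : ℝ) * (k.choose r : ℝ)
        = (m.choose r : ℝ) * ((-1:ℝ)^k * ((m-r).choose (k-r) : ℝ)) := by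
    intro k hk
    simp only [mem_Icc] at hk
    have := Nat.choose_mul (n := m) (k := k) (s := r) hk.1
    have hcast : (m.choose k : ℝ) * (k.choose r : ℝ)
        = (m.choose r : ℝ) * ((m-r).choose (k-r) : ℝ) := by
      exact_mod_cast congrArg (Nat.cast : ℕ → ℝ) this
    rw [mul_assoc, hcast]; ring
  rw [sum_congr rfl step, ← mul_sum]
  have : ∑ k ∈ Icc r m, (-1:ℝ)^k * ((m-r).choose (k-r) : ℝ) = 0 := by
    rw [← Finset.Ico_add_one_right_eq_Icc, Finset.sum_Ico_eq_sum_range]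
    have hmr : m + 1 - r = (m - r) + 1 := by omega
    rw [hmr]
    have : ∀ i ∈ range ((m-r)+1),
        (-1:ℝ)^(r + i) * ((m-r).choose (r + i - r) : ℝ)
          = (-1:ℝ)^r * ((-1:ℝ)^i * ((m-r).choose i : ℝ)) := by
      intro i _
      have h2 : r + i - r = i := by omega
      rw [h2, pow_add, mul_assoc]
    rw [sum_congr rfl this, ← mul_sum, altsum (by omega)]
    ring
  rw [this, mul_zero]

lemma key {s : ℕ} (hs : 1 ≤ s) (m : ℕ) (hm : s ≤ m) :
    ∑ k ∈ Icc s m, (-1:ℝ)^(k-s) * (m.choose k : ℝ) * ((k-1).choose (k-s) : ℝ) = 1 := by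
  induction m, hm using Nat.le_induction with
  | base => rw [Finset.Icc_self, Finset.sum_singleton]; simp
  | succ m hm ih =>
    have split : ∀ k ∈ Icc s (m+1),
        (-1:ℝ)^(k-s) * ((m+1).choose k : ℝ) * ((k-1).choose (k-s) : ℝ)
          = (-1:ℝ)^(k-s) * (m.choose k : ℝ) * ((k-1).choose (k-s) : ℝ)
            + (-1:ℝ)^(k-s) * (m.choose (k-1) : ℝ) * ((k-1).choose (k-s) : ℝ) := by
      intro k hk
      simp only [mem_Icc] at hk
      obtain ⟨j, rfl⟩ := Nat.exists_eq_succ_of_ne_zero (by omega : k ≠ 0)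
      rw [Nat.choose_succ_succ]
      push_cast
      ring
    rw [sum_congr rfl split, sum_add_distrib]
    have hS1 : ∑ k ∈ Icc s (m+1),
        (-1:ℝ)^(k-s) * (m.choose k:ℝ) * ((k-1).choose (k-s):ℝ) = 1 := by
      rw [Finset.sum_Icc_succ_top (by omega : s ≤ m+1), ih,
        Nat.choose_eq_zero_of_lt (by omega : m < m+1)]
      simp
    have hS2 : ∑ k ∈ Icc s (m+1),
        (-1:ℝ)^(k-s) * (m.choose (k-1):ℝ) * ((k-1).choose (k-s):ℝ) = 0 := by
      have h0 := lemC (r := s-1) (m := m) (by omega)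
      rw [← Finset.Ico_add_one_right_eq_Icc, Finset.sum_Ico_eq_sum_range] at h0 ⊢
      have hN : m + 1 + 1 - s = m + 1 - (s-1) := by omega
      rw [hN]
      have hterm : ∀ i ∈ range (m + 1 - (s-1)),
          (-1:ℝ)^(s-1+i) * (m.choose (s-1+i):ℝ) * ((s-1+i).choose (s-1):ℝ)
            = (-1:ℝ)^(s-1) * ((-1:ℝ)^i * (m.choose (s-1+i):ℝ) * ((s-1+i).choose (s-1):ℝ)) := by
        intro i _
        rw [pow_add]; ring
      rw [sum_congr rfl hterm, ← mul_sum] at h0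
      have h1 : ∑ i ∈ range (m + 1 - (s-1)),
          (-1:ℝ)^i * (m.choose (s-1+i):ℝ) * ((s-1+i).choose (s-1):ℝ) = 0 := by
        have hne : ((-1:ℝ)^(s-1)) ≠ 0 := by
          simp [pow_ne_zero]
        exact (mul_eq_zero.mp h0).resolve_left hne
      rw [← h1]
      apply sum_congr rfl
      intro i _
      have e1 : s + i - s = i := by omega
      have e2 : s + i - 1 = s - 1 + i := by omega
      rw [e1, e2]
      have e3 : (s - 1 + i).choose i = (s - 1 + i).choose (s-1) := by
        rw [Nat.add_comm]
        exact Nat.choose_symm_add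
      rw [e3]
    rw [hS1, hS2, add_zero]

lemma lemL (m : ℕ) (f : ℕ → ℝ) :
    ∑ k ∈ Icc 1 m, (m.choose k : ℝ) *
        (∑ i ∈ range k, ((k-1).choose i : ℝ) * (-1:ℝ)^i * f (m - k + i))
      = ∑ t ∈ range m, f t := by
  have inner : ∀ k ∈ Icc 1 m,
      (m.choose k : ℝ) * (∑ i ∈ range k, ((k-1).choose i : ℝ) * (-1:ℝ)^i * f (m - k + i))
        = ∑ t ∈ range m, (if m - k ≤ t then
            (m.choose k : ℝ) * (((k-1).choose (t-(m-k)) : ℝ) * (-1:ℝ)^(t-(m-k)) * f t)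
          else 0) := by
    intro k hk
    simp only [mem_Icc] at hk
    rw [← Finset.sum_filter]
    have hfil : (range m).filter (fun t => m - k ≤ t) = Ico (m-k) m := by
      ext t; simp only [mem_filter, mem_range, mem_Ico]; omega
    rw [hfil, Finset.sum_Ico_eq_sum_range]
    have hmk : m - (m - k) = k := by omega
    rw [hmk, mul_sum]
    apply sum_congr rfl
    intro i _
    have e : m - k + i - (m - k) = i := by omega
    rw [e]
  rw [sum_congr rfl inner, Finset.sum_comm]
  apply sum_congr rfl
  intro t ht
  simp only [mem_range] at ht
  rw [← Finset.sum_filter]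
  have hfil : (Icc 1 m).filter (fun k => m - k ≤ t) = Icc (m - t) m := by
    ext k; simp only [mem_filter, mem_Icc]; omega
  rw [hfil]
  have hterm : ∀ k ∈ Icc (m-t) m,
      (m.choose k : ℝ) * (((k-1).choose (t-(m-k)) : ℝ) * (-1:ℝ)^(t-(m-k)) * f t)
        = ((-1:ℝ)^(k-(m-t)) * (m.choose k : ℝ) * ((k-1).choose (k-(m-t)) : ℝ)) * f t := by
    intro k hk
    simp only [mem_Icc] at hk
    have e : t - (m - k) = k - (m - t) := by omega
    rw [e]; ring
  rw [sum_congr rfl hterm, ← sum_mul, key (by omega) m (by omega), one_mul]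

/-- The aggregate rate of the shocks hitting a fixed set of `j` of the `n`
components equals `Ψ j`: `Σ_{k=1}^{n} (C(n,k) - C(n-j,k)) · λ^{(n)}_k = Ψ j`. -/
theorem stmt6 (Ψ : ℕ → ℝ) (hΨ0 : Ψ 0 = 0) (n j : ℕ) (hj1 : 1 ≤ j) (hjn : j ≤ n) :
    ∑ k ∈ Finset.Icc 1 n,
        ((n.choose k : ℝ) - ((n - j).choose k : ℝ)) * lfmoRate Ψ n k = Ψ j := by
  set f : ℕ → ℝ := fun t => Ψ (t+1) - Ψ t with hf
  have hA : ∑ k ∈ Icc 1 n, (n.choose k : ℝ) * lfmoRate Ψ n k = ∑ t ∈ range n, f t :=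
    lemL n f
  have hB : ∑ k ∈ Icc 1 n, ((n-j).choose k : ℝ) * lfmoRate Ψ n k
      = ∑ t ∈ range (n-j), f (t+j) := by
    rw [← Finset.sum_subset (Finset.Icc_subset_Icc_right (by omega : n - j ≤ n))
      (by
        intro k hk hk'
        simp only [mem_Icc] at hk hk'
        rw [Nat.choose_eq_zero_of_lt (by omega), Nat.cast_zero, zero_mul])]
    have h := lemL (n-j) (fun t => f (t+j))
    rw [← h]
    apply sum_congr rfl
    intro k hk
    simp only [mem_Icc] at hk
    congr 1
    simp only [lfmoRate]
    apply sum_congr rfl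
    intro i _
    have e : n - k + i = n - j - k + i + j := by omega
    rw [e]
  have expand : ∀ k ∈ Icc 1 n, ((n.choose k:ℝ) - ((n-j).choose k:ℝ)) * lfmoRate Ψ n k
      = (n.choose k:ℝ)*lfmoRate Ψ n k - ((n-j).choose k:ℝ)*lfmoRate Ψ n k :=
    fun k _ => sub_mul _ _ _
  rw [sum_congr rfl expand, Finset.sum_sub_distrib, hA, hB]
  have h1 : ∑ t ∈ range (n-j), f (t+j) = ∑ t ∈ Ico j n, f t := by
    rw [Finset.sum_Ico_eq_sum_range]
    exact sum_congr rfl fun i _ => by rw [Nat.add_comm]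
  have h2 : ∑ t ∈ range j, f t + ∑ t ∈ Ico j n, f t = ∑ t ∈ range n, f t := by
    rw [Finset.range_eq_Ico, Finset.range_eq_Ico]
    exact Finset.sum_Ico_consecutive f (m := 0) (n := j) (k := n) (by omega) (by omega)
  have h3 : ∑ t ∈ range j, f t = Ψ j := by
    simp only [hf, Finset.sum_range_sub Ψ, hΨ0, sub_zero]
  linarith
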